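/- Let f : ℝ^d → ℝ be differentiable with a global minimizer x*. If f satisfies the Polyak–Łojasiewicz inequality 2γ(f(x) - f(x*)) ≤ ‖∇f(x)‖² for all x and some γ > 0, then along any gradient flow trajectory x'(t) = -∇f(x(t)) one has f(x(t)) - f(x*) ≤ e^{-2γt}(f(x(0)) - f(x*)) for all t ≥ 0. -/

import Mathlib

/-- If a differentiable `f` with global minimizer `xstar` satisfies the PL inequality
`2γ(f x - f xstar) ≤ ‖∇f x‖²`, then along any gradient-flow trajectory
`x'(t) = -∇f(x t)` one has `f (x t) - f xstar ≤ e^{-2γt} (f (x 0) - f xstar)` for `t ≥ 0`. -/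
theorem stmt_1 {d : ℕ} (f : EuclideanSpace ℝ (Fin d) → ℝ) (hf : Differentiable ℝ f)
    (xstar : EuclideanSpace ℝ (Fin d)) (hmin : ∀ y, f xstar ≤ f y)
    (γ : ℝ) (hγ : 0 < γ)
    (hPL : ∀ x, 2 * γ * (f x - f xstar) ≤ ‖gradient f x‖ ^ 2)
    (x : ℝ → EuclideanSpace ℝ (Fin d))
    (hx : ∀ t, 0 ≤ t → HasDerivAt x (-(gradient f (x t))) t) :
    ∀ t, 0 ≤ t → f (x t) - f xstar ≤ Real.exp (-2 * γ * t) * (f (x 0) - f xstar) := by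
  set g : ℝ → ℝ := fun t => (f (x t) - f xstar) * Real.exp (2 * γ * t) with hg
  have hgd : ∀ t, 0 ≤ t → HasDerivAt g
      (Real.exp (2 * γ * t) * (2 * γ * (f (x t) - f xstar) - ‖gradient f (x t)‖ ^ 2)) t := by
    intro t ht
    have h1 : HasDerivAt (fun t => f (x t)) (-‖gradient f (x t)‖ ^ 2) t := by
      have := ((hf (x t)).hasGradientAt.hasFDerivAt).comp_hasDerivAt t (hx t ht)
      refine this.congr_deriv ?_
      simp only [InnerProductSpace.toDual_apply_apply, inner_neg_right, real_inner_self_eq_norm_sq]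
    have h2 : HasDerivAt (fun t => Real.exp (2 * γ * t)) (Real.exp (2 * γ * t) * (2 * γ)) t := by
      simpa [mul_comm] using ((hasDerivAt_id t).const_mul (2 * γ)).exp
    have := (h1.sub_const (f xstar)).mul h2
    refine this.congr_deriv ?_
    ring
  have hmono : AntitoneOn g (Set.Ici 0) := by
    apply antitoneOn_of_deriv_nonpos (convex_Ici 0)
    · exact fun t ht => ((hgd t ht).continuousAt).continuousWithinAt
    · intro t ht
      rw [interior_Ici] at ht
      exact (hgd t ht.le).differentiableAt.differentiableWithinAt
    · intro t ht
      rw [interior_Ici] at ht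
      rw [(hgd t ht.le).deriv]
      have := hPL (x t)
      have hexp : 0 < Real.exp (2 * γ * t) := Real.exp_pos _
      nlinarith
  intro t ht
  have := hmono (Set.self_mem_Ici) ht ht
  simp only [hg, mul_zero, Real.exp_zero, mul_one] at this
  have hexp : 0 < Real.exp (2 * γ * t) := Real.exp_pos _
  rw [show (-2 : ℝ) * γ * t = -(2 * γ * t) by ring, Real.exp_neg, inv_mul_eq_div,
    le_div_iff₀ hexp]
  exact this
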